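/- Define ũ₄ : ℝ² → ℝ by ũ₄(x₁,x₂) = 0 if x₂ ≤ 0; ũ₄(x₁,x₂) = x₂/√|x₁| if x₂ ≥ 0, x₁ ≠ 0 and |x₁|/2 ≥ x₂; and ũ₄(x₁,x₂) = √|x₁|(x₂+1)/(|x₁|+2) otherwise. Then ũ₄ is continuous at the origin but not point-Lipschitz at the origin: for every neighborhood U of (0,0) and every L ≥ 0 there exists x ∈ U with |ũ₄(x) − ũ₄(0,0)| > L‖x‖. In particular, for p_{x₁} = (x₁, x₁/2) with x₁ > 0, one has |ũ₄(p_{x₁}) − ũ₄(0,0)| / ‖p_{x₁}‖ = 1/√(5 x₁). -/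

import Mathlib

open Set Filter

/-- The fourth component of the parametric optimizer of the variant of Robinson's
counterexample in which the entry `x₁` of the constraint matrix is replaced by `√|x₁|`.
Here the plane carries the Euclidean norm. -/
noncomputable def ut4 (x : EuclideanSpace ℝ (Fin 2)) : ℝ :=
  if x 1 ≤ 0 then 0
  else if 0 ≤ x 1 ∧ x 0 ≠ 0 ∧ x 1 ≤ |x 0| / 2 then x 1 / Real.sqrt |x 0|
  else Real.sqrt |x 0| * (x 1 + 1) / (|x 0| + 2)

/-- The point `p_{x₁} = (x₁, x₁/2)` as an element of the Euclidean plane. -/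
noncomputable def pPt (a : ℝ) : EuclideanSpace ℝ (Fin 2) :=
  (WithLp.equiv 2 (Fin 2 → ℝ)).symm ![a, a / 2]

lemma coord_le_norm (x : EuclideanSpace ℝ (Fin 2)) (i : Fin 2) : |x i| ≤ ‖x‖ := by
  rw [EuclideanSpace.norm_eq]
  have : |x i| = Real.sqrt (‖x i‖ ^ 2) := by
    rw [Real.sqrt_sq_eq_abs, abs_norm, Real.norm_eq_abs]
  rw [this]
  apply Real.sqrt_le_sqrt
  exact Finset.single_le_sum (f := fun j => ‖x j‖ ^ 2) (fun j _ => sq_nonneg _)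
    (Finset.mem_univ i)

lemma ut4_zero : ut4 0 = 0 := by
  simp [ut4]

lemma ut4_bound (x : EuclideanSpace ℝ (Fin 2)) (hx : ‖x‖ ≤ 1) :
    |ut4 x| ≤ Real.sqrt ‖x‖ := by
  have h0 : |x 0| ≤ ‖x‖ := coord_le_norm x 0
  have h1 : |x 1| ≤ ‖x‖ := coord_le_norm x 1
  have hs : Real.sqrt |x 0| ≤ Real.sqrt ‖x‖ := Real.sqrt_le_sqrt h0
  unfold ut4
  split_ifs with hc1 hc2
  · simpa using Real.sqrt_nonneg ‖x‖
  · obtain ⟨hx1, hx0, hle⟩ := hc2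
    have hpos : 0 < Real.sqrt |x 0| := Real.sqrt_pos.mpr (abs_pos.mpr hx0)
    rw [abs_of_nonneg (div_nonneg hx1 hpos.le)]
    calc x 1 / Real.sqrt |x 0| ≤ (|x 0| / 2) / Real.sqrt |x 0| := by gcongr
        _ = Real.sqrt |x 0| / 2 := by rw [div_right_comm, Real.div_sqrt]
        _ ≤ Real.sqrt |x 0| := by linarith [Real.sqrt_nonneg |x 0|]
        _ ≤ Real.sqrt ‖x‖ := hs
  · push_neg at hc1
    have hx1 : 0 < x 1 := hc1
    have hx1' : x 1 ≤ 1 := le_trans (le_abs_self _) (h1.trans hx)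
    have hden : (0:ℝ) < |x 0| + 2 := by positivity
    have hnn : 0 ≤ Real.sqrt |x 0| * (x 1 + 1) / (|x 0| + 2) := by positivity
    rw [abs_of_nonneg hnn]
    calc Real.sqrt |x 0| * (x 1 + 1) / (|x 0| + 2)
        ≤ Real.sqrt |x 0| * (x 1 + 1) / 2 := by
          apply div_le_div_of_nonneg_left (by positivity) (by norm_num) (by linarith [abs_nonneg (x 0)])
      _ ≤ Real.sqrt |x 0| := by
          rw [div_le_iff₀ (by norm_num)]
          nlinarith [Real.sqrt_nonneg |x 0|]
      _ ≤ Real.sqrt ‖x‖ := hs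

lemma pPt_apply0 (a : ℝ) : pPt a 0 = a := rfl
lemma pPt_apply1 (a : ℝ) : pPt a 1 = a / 2 := rfl

lemma pPt_norm (a : ℝ) (ha : 0 < a) : ‖pPt a‖ = a * Real.sqrt 5 / 2 := by
  rw [EuclideanSpace.norm_eq, Fin.sum_univ_two, pPt_apply0, pPt_apply1]
  rw [Real.norm_eq_abs, Real.norm_eq_abs, sq_abs, sq_abs]
  have : a ^ 2 + (a / 2) ^ 2 = (a / 2) ^ 2 * 5 := by ring
  rw [this, Real.sqrt_mul (by positivity), Real.sqrt_sq (by positivity)]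
  ring

lemma ut4_pPt (a : ℝ) (ha : 0 < a) : ut4 (pPt a) = (a / 2) / Real.sqrt a := by
  unfold ut4
  rw [pPt_apply0, pPt_apply1, abs_of_pos ha]
  rw [if_neg (by linarith), if_pos ⟨by linarith, ha.ne', le_refl _⟩]

lemma quot_eq (a : ℝ) (ha : 0 < a) :
    |ut4 (pPt a) - ut4 0| / ‖pPt a‖ = 1 / Real.sqrt (5 * a) := by
  rw [ut4_zero, sub_zero, ut4_pPt a ha, pPt_norm a ha]
  have hsa : 0 < Real.sqrt a := Real.sqrt_pos.mpr ha
  have hs5 : 0 < Real.sqrt 5 := Real.sqrt_pos.mpr (by norm_num)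
  have habs : |(a / 2) / Real.sqrt a| = (a / 2) / Real.sqrt a :=
    abs_of_nonneg (by positivity)
  rw [habs, Real.sqrt_mul (by norm_num)]
  have h5 : Real.sqrt 5 * Real.sqrt 5 = 5 := Real.mul_self_sqrt (by norm_num)
  have haa : Real.sqrt a * Real.sqrt a = a := Real.mul_self_sqrt ha.le
  field_simp

/-- `ũ₄` is continuous at the origin but not point-Lipschitz there; in
particular for `p_{x₁} = (x₁, x₁/2)` with `x₁ > 0`, the difference quotient equals
`1/√(5 x₁)`. -/
theorem stmt_12 :
    ContinuousAt ut4 0 ∧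
    (∀ U ∈ nhds (0 : EuclideanSpace ℝ (Fin 2)), ∀ L : ℝ, 0 ≤ L →
      ∃ x ∈ U, L * ‖x‖ < |ut4 x - ut4 0|) ∧
    (∀ a : ℝ, 0 < a →
      |ut4 (pPt a) - ut4 0| / ‖pPt a‖ = 1 / Real.sqrt (5 * a)) := by
  refine ⟨?_, ?_, fun a ha => quot_eq a ha⟩
  · rw [Metric.continuousAt_iff]
    intro ε hε
    refine ⟨min 1 (ε ^ 2 / 2), by positivity, fun x hx => ?_⟩
    rw [dist_zero_right] at hx
    have hx1 : ‖x‖ ≤ 1 := le_of_lt (lt_of_lt_of_le hx (min_le_left _ _))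
    have hx2 : ‖x‖ < ε ^ 2 := lt_of_lt_of_le hx
      ((min_le_right _ _).trans (by nlinarith))
    rw [dist_eq_norm, ut4_zero, sub_zero, Real.norm_eq_abs]
    calc |ut4 x| ≤ Real.sqrt ‖x‖ := ut4_bound x hx1
      _ < Real.sqrt (ε ^ 2) := by
          apply Real.sqrt_lt_sqrt (norm_nonneg _) hx2
      _ = ε := Real.sqrt_sq hε.le
  · intro U hU L hL
    obtain ⟨r, hr, hball⟩ := Metric.mem_nhds_iff.mp hU
    set a := min (r / 2) (1 / (5 * (L + 1) ^ 2)) with hadef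
    have ha : 0 < a := by positivity
    have hnorm : ‖pPt a‖ = a * Real.sqrt 5 / 2 := pPt_norm a ha
    have hnpos : 0 < ‖pPt a‖ := by rw [hnorm]; positivity
    refine ⟨pPt a, hball ?_, ?_⟩
    · rw [Metric.mem_ball, dist_zero_right, hnorm]
      have h5 : Real.sqrt 5 < 3 := by
        rw [show (3:ℝ) = Real.sqrt 9 by rw [show (9:ℝ) = 3 ^ 2 by norm_num, Real.sqrt_sq] <;> norm_num]
        exact Real.sqrt_lt_sqrt (by norm_num) (by norm_num)
      have har : a ≤ r / 2 := min_le_left _ _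
      nlinarith
    · rw [ut4_zero, sub_zero]
      have hquot := quot_eq a ha
      rw [ut4_zero, sub_zero] at hquot
      have key : |ut4 (pPt a)| = ‖pPt a‖ / Real.sqrt (5 * a) := by
        field_simp at hquot ⊢
        linarith [hquot]
      rw [key]
      rw [lt_div_iff₀ (Real.sqrt_pos.mpr (by positivity))]
      have hL1 : Real.sqrt (5 * a) ≤ 1 / (L + 1) := by
        have ha2 : 5 * a ≤ 1 / (L + 1) ^ 2 := by
          have := min_le_right (r / 2) (1 / (5 * (L + 1) ^ 2))
          rw [← hadef] at this
          rw [le_div_iff₀ (by positivity)] at this ⊢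
          nlinarith
        calc Real.sqrt (5 * a) ≤ Real.sqrt (1 / (L + 1) ^ 2) := Real.sqrt_le_sqrt ha2
          _ = 1 / (L + 1) := by
              rw [one_div, Real.sqrt_inv, Real.sqrt_sq (by positivity), one_div]
      have : L * Real.sqrt (5 * a) ≤ L / (L + 1) := by
        calc L * Real.sqrt (5 * a) ≤ L * (1 / (L + 1)) :=
            mul_le_mul_of_nonneg_left hL1 hL
          _ = L / (L + 1) := by ring
      have hlt : L / (L + 1) < 1 := by
        rw [div_lt_one (by linarith)]; linarith
      calc L * ‖pPt a‖ * Real.sqrt (5 * a) = (L * Real.sqrt (5 * a)) * ‖pPt a‖ := by ring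
        _ ≤ (L / (L + 1)) * ‖pPt a‖ := mul_le_mul_of_nonneg_right this hnpos.le
        _ < 1 * ‖pPt a‖ := by exact mul_lt_mul_of_pos_right hlt hnpos
        _ = ‖pPt a‖ := one_mul _
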